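/- arXiv:hep-th/9309159 — 3 statements merged into one kernel-verified Lean document; each statement's English description precedes it below -/
import Mathlib

section
/- Let L(0) and L(-1) be elements of an associative Q-algebra with [L(0), L(-1)] = L(-1). Then the formal-power-series derivative in x of the product (1-x)^{L(0) - zL(-1)} · (1-x)^{-L(0)} · e^{-zxL(-1)} is zero; consequently this product equals 1. -/
/-- Formal exponential `exp f = ∑ₖ fᵏ/k!`, defined coefficientwise (well-defined
for `f` with zero constant term). -/
noncomputable def psExp (K : Type*) [Field K] [CharZero K] {A : Type*} [Ring A] [Algebra K A]
    (f : PowerSeries A) : PowerSeries A :=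
  PowerSeries.mk fun n => ∑ k ∈ Finset.range (n + 1),
    ((k.factorial : K))⁻¹ • (PowerSeries.coeff n (f ^ k))

/-- The formal power series `log (1 - x) = -∑_{n ≥ 1} xⁿ/n`. -/
noncomputable def psLogOneSub (K : Type*) [Field K] [CharZero K] {A : Type*} [Ring A]
    [Algebra K A] : PowerSeries A :=
  PowerSeries.mk fun n => if n = 0 then 0 else -(((n : K))⁻¹ • (1 : A))

/-- `(1-x)^a := exp (a · log (1-x))`. -/
noncomputable def oneSubXPow (K : Type*) [Field K] [CharZero K] {A : Type*} [Ring A]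
    [Algebra K A] (a : A) : PowerSeries A :=
  psExp K (PowerSeries.C a * psLogOneSub K)

/-- Coefficientwise formal derivative `d/dx` of a power series over a
(possibly noncommutative) ring. -/
noncomputable def psDeriv {A : Type*} [Ring A] (f : PowerSeries A) : PowerSeries A :=
  PowerSeries.mk fun n => (n + 1) • (PowerSeries.coeff (n + 1) f)

open PowerSeries Finset
set_option linter.unusedSectionVars false

section Aux
variable {A : Type*} [Ring A] [Algebra ℚ A]

lemma coeff_psDeriv (f : PowerSeries A) (n : ℕ) :
    coeff n (psDeriv f) = (n + 1) • coeff (n + 1) f := by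
  simp [psDeriv]

lemma psDeriv_one : psDeriv (1 : PowerSeries A) = 0 := by
  ext n
  simp [coeff_psDeriv, coeff_one]

-- Leibniz rule
lemma psDeriv_mul (f g : PowerSeries A) :
    psDeriv (f * g) = psDeriv f * g + f * psDeriv g := by
  ext n
  rw [coeff_psDeriv, map_add, coeff_mul, coeff_mul, coeff_mul,
    Finset.Nat.sum_antidiagonal_eq_sum_range_succ_mk,
    Finset.Nat.sum_antidiagonal_eq_sum_range_succ_mk,
    Finset.Nat.sum_antidiagonal_eq_sum_range_succ_mk]
  have h1 : ∑ k ∈ range (n+1), coeff k (psDeriv f) * coeff (n-k) g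
      = ∑ k ∈ range (n+1), (k+1) • (coeff (k+1) f * coeff (n+1-(k+1)) g) := by
    refine Finset.sum_congr rfl fun k hk => ?_
    rw [coeff_psDeriv, smul_mul_assoc, Nat.succ_sub_succ]
  have h2 : ∑ k ∈ range (n+1), coeff k f * coeff (n-k) (psDeriv g)
      = ∑ k ∈ range (n+1), (n+1-k) • (coeff k f * coeff (n+1-k) g) := by
    refine Finset.sum_congr rfl fun k hk => ?_
    rw [mem_range] at hk
    have e : n + 1 - k = n - k + 1 := by omega
    rw [coeff_psDeriv, mul_smul_comm, e]
  rw [h1, h2]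
  have h3 : ∑ k ∈ range (n+1), (k+1) • (coeff (k+1) f * coeff (n+1-(k+1)) g)
      = ∑ k ∈ range (n+2), k • (coeff k f * coeff (n+1-k) g) := by
    rw [Finset.sum_range_succ' (fun k => k • (coeff k f * coeff (n+1-k) g)) (n+1)]
    simp
  have h4 : ∑ k ∈ range (n+2), (n+1-k) • (coeff k f * coeff (n+1-k) g)
      = ∑ k ∈ range (n+1), (n+1-k) • (coeff k f * coeff (n+1-k) g) := by
    rw [Finset.sum_range_succ]
    simp
  rw [h3, ← h4, ← Finset.sum_add_distrib, Finset.smul_sum]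
  refine Finset.sum_congr rfl fun k hk => ?_
  rw [mem_range] at hk
  rw [← add_smul]
  congr 1
  omega


/-- mul with commuting coefficients commutes -/
lemma commute_of_coeff_commute {f g : PowerSeries A}
    (h : ∀ i j, Commute (coeff i f) (coeff j g)) : Commute f g := by
  unfold Commute SemiconjBy
  ext n
  rw [coeff_mul, coeff_mul, ← Finset.Nat.sum_antidiagonal_swap]
  exact Finset.sum_congr rfl fun p hp => (h p.2 p.1).eq

/-- coefficients of a product commute with b if coefficients of factors do -/
lemma coeff_mul_commute {f g : PowerSeries A} (b : A)
    (hf : ∀ i, Commute b (coeff i f)) (hg : ∀ i, Commute b (coeff i g)) :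
    ∀ n, Commute b (coeff n (f * g)) := by
  intro n
  rw [coeff_mul]
  exact Commute.sum_right _ _ _ fun p _ => (hf p.1).mul_right (hg p.2)

lemma coeff_pow_commute {f : PowerSeries A} (b : A)
    (hf : ∀ i, Commute b (coeff i f)) (k : ℕ) :
    ∀ n, Commute b (coeff n (f ^ k)) := by
  induction k with
  | zero => intro n; simp [coeff_one]; split <;> simp
  | succ k ih =>
      rw [pow_succ]
      exact coeff_mul_commute b ih hf

lemma coeff_psExp_commute {f : PowerSeries A} (b : A)
    (hf : ∀ i, Commute b (coeff i f)) :
    ∀ n, Commute b (coeff n (psExp ℚ f)) := by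
  intro n
  simp only [psExp, coeff_mk]
  exact Commute.sum_right _ _ _ fun k _ => (coeff_pow_commute b hf k n).smul_right _

/-- vanishing of low coefficients of powers -/
lemma coeff_pow_eq_zero' {f : PowerSeries A} (hf : constantCoeff f = 0) {k n : ℕ}
    (h : n < k) : coeff n (f ^ k) = 0 := by
  induction k generalizing n with
  | zero => omega
  | succ k ih =>
      rw [pow_succ, coeff_mul]
      refine Finset.sum_eq_zero fun p hp => ?_
      rw [Finset.HasAntidiagonal.mem_antidiagonal] at hp
      rcases Nat.lt_or_ge p.1 k with h1 | h1
      · rw [ih h1, zero_mul]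
      · have h2 : p.2 = 0 := by omega
        have hz : coeff p.2 f = 0 := by
          rw [h2, coeff_zero_eq_constantCoeff_apply, hf]
        rw [hz, mul_zero]

/-- expansion of (psExp f) * g coefficients -/
lemma coeff_psExp_mul {f : PowerSeries A} (hf : constantCoeff f = 0) (g : PowerSeries A)
    (n : ℕ) : coeff n (psExp ℚ f * g)
      = ∑ k ∈ range (n+1), ((k.factorial : ℚ))⁻¹ • coeff n (f ^ k * g) := by
  rw [coeff_mul]
  have : ∀ p ∈ antidiagonal n, coeff p.1 (psExp ℚ f) * coeff p.2 g
      = ∑ k ∈ range (n+1), ((k.factorial : ℚ))⁻¹ • (coeff p.1 (f ^ k) * coeff p.2 g) := by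
    intro p hp
    rw [Finset.HasAntidiagonal.mem_antidiagonal] at hp
    have sub : range (p.1+1) ⊆ range (n+1) := Finset.range_subset_range.2 (by omega)
    have e1 : ∑ k ∈ range (p.1+1), ((k.factorial : ℚ))⁻¹ • (coeff p.1 (f^k) * coeff p.2 g)
        = ∑ k ∈ range (n+1), ((k.factorial : ℚ))⁻¹ • (coeff p.1 (f^k) * coeff p.2 g) :=
      Finset.sum_subset sub (fun k _ hk => by
        rw [mem_range, not_lt] at hk
        rw [coeff_pow_eq_zero' hf (by omega), zero_mul, smul_zero])
    rw [← e1]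
    simp only [psExp, coeff_mk, Finset.sum_mul]
    exact Finset.sum_congr rfl fun k _ => smul_mul_assoc _ _ _
  rw [Finset.sum_congr rfl this, Finset.sum_comm]
  exact Finset.sum_congr rfl fun k _ => by rw [coeff_mul, Finset.smul_sum]

/-- expansion of g * (psExp f) coefficients -/
lemma coeff_mul_psExp {f : PowerSeries A} (hf : constantCoeff f = 0) (g : PowerSeries A)
    (n : ℕ) : coeff n (g * psExp ℚ f)
      = ∑ k ∈ range (n+1), ((k.factorial : ℚ))⁻¹ • coeff n (g * f ^ k) := by
  rw [coeff_mul]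
  have : ∀ p ∈ antidiagonal n, coeff p.1 g * coeff p.2 (psExp ℚ f)
      = ∑ k ∈ range (n+1), ((k.factorial : ℚ))⁻¹ • (coeff p.1 g * coeff p.2 (f ^ k)) := by
    intro p hp
    rw [Finset.HasAntidiagonal.mem_antidiagonal] at hp
    have sub : range (p.2+1) ⊆ range (n+1) := Finset.range_subset_range.2 (by omega)
    have e1 : ∑ k ∈ range (p.2+1), ((k.factorial : ℚ))⁻¹ • (coeff p.1 g * coeff p.2 (f^k))
        = ∑ k ∈ range (n+1), ((k.factorial : ℚ))⁻¹ • (coeff p.1 g * coeff p.2 (f^k)) :=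
      Finset.sum_subset sub (fun k _ hk => by
        rw [mem_range, not_lt] at hk
        rw [coeff_pow_eq_zero' hf (by omega), mul_zero, smul_zero])
    rw [← e1]
    simp only [psExp, coeff_mk, Finset.mul_sum]
    exact Finset.sum_congr rfl fun k _ => mul_smul_comm _ _ _
  rw [Finset.sum_congr rfl this, Finset.sum_comm]
  exact Finset.sum_congr rfl fun k _ => by rw [coeff_mul, Finset.smul_sum]

lemma constantCoeff_psExp {f : PowerSeries A} (hf : constantCoeff f = 0) :
    constantCoeff (psExp ℚ f) = 1 := by
  rw [← coeff_zero_eq_constantCoeff_apply]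
  simp [psExp, coeff_mk]

lemma psDeriv_add (f g : PowerSeries A) : psDeriv (f + g) = psDeriv f + psDeriv g := by
  ext n; simp [coeff_psDeriv]

lemma psDeriv_pow_succ {f : PowerSeries A} (hc : Commute f (psDeriv f)) (k : ℕ) :
    psDeriv (f ^ (k+1)) = (k+1) • (f ^ k * psDeriv f) := by
  induction k with
  | zero => simp [psDeriv_mul, psDeriv_one]
  | succ k ih =>
      rw [pow_succ, psDeriv_mul, ih, pow_succ]
      have h1 : (k+1) • (f ^ k * psDeriv f) * f = (k+1) • (f ^ k * f * psDeriv f) := by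
        rw [smul_mul_assoc, mul_assoc, ← hc.eq, ← mul_assoc]
      rw [h1, ← succ_nsmul (f ^ k * f * psDeriv f) (k+1)]

lemma psDeriv_psExp {f : PowerSeries A} (hf : constantCoeff f = 0)
    (hc : Commute f (psDeriv f)) :
    psDeriv (psExp ℚ f) = psExp ℚ f * psDeriv f := by
  ext n
  rw [coeff_psDeriv, coeff_psExp_mul hf]
  have e0 : coeff (n+1) (psExp ℚ f)
      = ∑ k ∈ range (n+2), ((k.factorial : ℚ))⁻¹ • coeff (n+1) (f ^ k) := by
    simp [psExp, coeff_mk]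
  rw [e0, Finset.smul_sum]
  have e1 : ∀ k ∈ range (n+2), (n+1) • (((k.factorial : ℚ))⁻¹ • coeff (n+1) (f ^ k))
      = ((k.factorial : ℚ))⁻¹ • coeff n (psDeriv (f ^ k)) := by
    intro k _
    rw [coeff_psDeriv, smul_comm]
  rw [Finset.sum_congr rfl e1]
  rw [Finset.sum_range_succ' (fun k => ((k.factorial : ℚ))⁻¹ • coeff n (psDeriv (f ^ k))) (n+1)]
  have e2 : (((0:ℕ).factorial : ℚ))⁻¹ • coeff n (psDeriv (f ^ 0)) = 0 := by
    simp [psDeriv_one]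
  rw [e2, add_zero]
  refine Finset.sum_congr rfl fun k _ => ?_
  rw [psDeriv_pow_succ hc k, map_nsmul, ← Nat.cast_smul_eq_nsmul ℚ, smul_smul]
  congr 1
  have hk : ((k.factorial : ℚ)) ≠ 0 := Nat.cast_ne_zero.2 k.factorial_ne_zero
  rw [Nat.factorial_succ]
  push_cast
  field_simp

/-- Uniqueness for the linear ODE `f' = h f`. -/
lemma ode_unique {h f g : PowerSeries A} (hf : psDeriv f = h * f) (hg : psDeriv g = h * g)
    (h0 : constantCoeff f = constantCoeff g) : f = g := by
  ext n
  induction n using Nat.strong_induction_on with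
  | _ n ih =>
    match n with
    | 0 => simpa [coeff_zero_eq_constantCoeff_apply] using h0
    | n+1 =>
      have key : (n+1) • coeff (n+1) f = (n+1) • coeff (n+1) g := by
        have hfc := congrArg (coeff n) hf
        have hgc := congrArg (coeff n) hg
        rw [coeff_psDeriv] at hfc hgc
        rw [hfc, hgc, coeff_mul, coeff_mul]
        refine Finset.sum_congr rfl fun p hp => ?_
        rw [Finset.HasAntidiagonal.mem_antidiagonal] at hp
        rw [ih p.2 (by omega)]
      have h1 : ((n+1:ℕ):ℚ) ≠ 0 := by positivity
      have h2 : ((n+1:ℕ):ℚ) • coeff (n+1) f = ((n+1:ℕ):ℚ) • coeff (n+1) g := by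
        rw [Nat.cast_smul_eq_nsmul, Nat.cast_smul_eq_nsmul]; exact key
      calc coeff (n+1) f
          = (((n+1:ℕ):ℚ))⁻¹ • (((n+1:ℕ):ℚ) • coeff (n+1) f) := by
            rw [smul_smul, inv_mul_cancel₀ h1, one_smul]
        _ = (((n+1:ℕ):ℚ))⁻¹ • (((n+1:ℕ):ℚ) • coeff (n+1) g) := by rw [h2]
        _ = coeff (n+1) g := by rw [smul_smul, inv_mul_cancel₀ h1, one_smul]

/-- `∑ xⁿ`, the inverse of `1 - X`. -/
noncomputable def invOneSubX (A : Type*) [Ring A] : PowerSeries A :=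
  PowerSeries.mk fun _ => (1 : A)

lemma one_sub_X_mul_invOneSubX : (1 - X) * invOneSubX A = 1 := by
  ext n
  rw [sub_mul, one_mul, map_sub, coeff_one]
  cases n with
  | zero => simp [invOneSubX, coeff_mk]
  | succ n => simp [invOneSubX, coeff_mk, coeff_succ_X_mul]
lemma psDeriv_C (a : A) : psDeriv (C a : PowerSeries A) = 0 := by
  ext n
  simp [coeff_psDeriv, coeff_C]

lemma psDeriv_C_mul (a : A) (f : PowerSeries A) :
    psDeriv (C a * f) = C a * psDeriv f := by
  ext n
  rw [coeff_psDeriv, coeff_C_mul, coeff_C_mul, coeff_psDeriv, mul_smul_comm]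

lemma psDeriv_one_sub_X : psDeriv (1 - X : PowerSeries A) = -1 := by
  ext n
  rw [coeff_psDeriv, map_sub, coeff_one, coeff_X]
  cases n with
  | zero => simp
  | succ n => simp [Nat.succ_ne_zero]

lemma psDeriv_C_mul_X (b : A) : psDeriv (C b * X) = C b := by
  ext n
  rw [coeff_psDeriv, coeff_C_mul, coeff_X, coeff_C]
  cases n with
  | zero => simp
  | succ n => simp

/-- Series whose coefficients are all rational multiples of 1. -/
def IsScalarPS (u : PowerSeries A) : Prop := ∀ i, ∃ q : ℚ, coeff i u = q • (1 : A)

lemma IsScalarPS.commute {u : PowerSeries A} (hu : IsScalarPS u) (f : PowerSeries A) :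
    Commute u f := by
  refine commute_of_coeff_commute fun i j => ?_
  obtain ⟨q, hq⟩ := hu i
  rw [hq]
  exact (Commute.one_left _).smul_left q

lemma IsScalarPS.psDeriv {u : PowerSeries A} (hu : IsScalarPS u) : IsScalarPS (psDeriv u) := by
  intro i
  obtain ⟨q, hq⟩ := hu (i + 1)
  refine ⟨((i+1 : ℕ) : ℚ) * q, ?_⟩
  rw [coeff_psDeriv, hq, ← Nat.cast_smul_eq_nsmul ℚ, smul_smul]

lemma isScalarPS_psLogOneSub : IsScalarPS (psLogOneSub ℚ : PowerSeries A) := by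
  intro i
  simp only [psLogOneSub, coeff_mk]
  split
  · exact ⟨0, by simp⟩
  · exact ⟨-((i : ℚ))⁻¹, by rw [neg_smul]⟩

lemma isScalarPS_invOneSubX : IsScalarPS (invOneSubX A) :=
  fun i => ⟨1, by simp [invOneSubX, coeff_mk]⟩

lemma isScalarPS_X : IsScalarPS (X : PowerSeries A) := by
  intro i
  rw [coeff_X]
  split
  · exact ⟨1, by simp⟩
  · exact ⟨0, by simp⟩

lemma isScalarPS_one_sub_X : IsScalarPS (1 - X : PowerSeries A) := by
  intro i
  rw [map_sub, coeff_one, coeff_X]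
  rcases Nat.eq_zero_or_pos i with h | h
  · subst h; exact ⟨1, by norm_num⟩
  · have h1 : ¬ i = 0 := by omega
    by_cases h2 : i = 1
    · subst h2; exact ⟨-1, by norm_num⟩
    · exact ⟨0, by simp [h1, h2]⟩

lemma invOneSubX_mul_one_sub_X : invOneSubX A * (1 - X) = 1 := by
  rw [((isScalarPS_invOneSubX (A := A)).commute (1 - X)).eq]
  exact one_sub_X_mul_invOneSubX

lemma commute_C_mul_scalar (a : A) {u v : PowerSeries A} (hu : IsScalarPS u)
    (hv : IsScalarPS v) : Commute (C a * u) (C a * v) := by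
  refine commute_of_coeff_commute fun i j => ?_
  obtain ⟨q, hq⟩ := hu i
  obtain ⟨r, hr⟩ := hv j
  rw [coeff_C_mul, coeff_C_mul, hq, hr, mul_smul_comm, mul_one, mul_smul_comm, mul_one]
  exact ((Commute.refl a).smul_left q).smul_right r

lemma commute_C_psExp (b a : A) (hab : Commute b a) {u : PowerSeries A} (hu : IsScalarPS u) :
    Commute (C b) (psExp ℚ (C a * u)) := by
  have h : ∀ i, Commute b (coeff i (C a * u)) := by
    intro i
    obtain ⟨q, hq⟩ := hu i
    rw [coeff_C_mul, hq, mul_smul_comm, mul_one]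
    exact hab.smul_right q
  refine commute_of_coeff_commute fun i j => ?_
  rw [coeff_C]
  split
  · exact coeff_psExp_commute b h j
  · exact Commute.zero_left _

lemma constantCoeff_psLogOneSub : constantCoeff (psLogOneSub ℚ : PowerSeries A) = 0 := by
  rw [← coeff_zero_eq_constantCoeff_apply]
  simp [psLogOneSub]

lemma constantCoeff_C_mul_log (a : A) :
    constantCoeff (C a * psLogOneSub ℚ) = 0 := by
  rw [map_mul, constantCoeff_psLogOneSub, mul_zero]

lemma psDeriv_psLogOneSub : psDeriv (psLogOneSub ℚ : PowerSeries A) = -invOneSubX A := by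
  ext n
  rw [coeff_psDeriv]
  simp only [psLogOneSub, coeff_mk, map_neg, invOneSubX]
  rw [if_neg (Nat.succ_ne_zero n), smul_neg, ← Nat.cast_smul_eq_nsmul ℚ, smul_smul,
    mul_inv_cancel₀ (by positivity : ((n+1:ℕ):ℚ) ≠ 0), one_smul]

lemma psDeriv_oneSubXPow (a : A) :
    psDeriv (oneSubXPow ℚ a) = oneSubXPow ℚ a * (C a * (-invOneSubX A)) := by
  unfold oneSubXPow
  have hc : Commute (C a * psLogOneSub ℚ) (psDeriv (C a * psLogOneSub ℚ)) := by
    rw [psDeriv_C_mul]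
    exact commute_C_mul_scalar a isScalarPS_psLogOneSub isScalarPS_psLogOneSub.psDeriv
  rw [psDeriv_psExp (constantCoeff_C_mul_log a) hc, psDeriv_C_mul, psDeriv_psLogOneSub]

lemma psDeriv_expE (b : A) :
    psDeriv (psExp ℚ (C b * X)) = psExp ℚ (C b * X) * C b := by
  have hf0 : constantCoeff (C b * X) = 0 := by
    rw [map_mul, constantCoeff_X, mul_zero]
  have hc : Commute (C b * X) (psDeriv (C b * X)) := by
    rw [psDeriv_C_mul_X]
    exact Commute.mul_left (Commute.refl (C b)) ((isScalarPS_X).commute (C b))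
  rw [psDeriv_psExp hf0 hc, psDeriv_C_mul_X]
lemma central_pull {c : PowerSeries A} (hc : ∀ f, Commute c f) (x y : PowerSeries A) :
    c * (x * y) = x * (c * y) := by rw [← mul_assoc, (hc x).eq, mul_assoc]

lemma constantCoeff_oneSubXPow (a : A) : constantCoeff (oneSubXPow ℚ a) = 1 :=
  constantCoeff_psExp (constantCoeff_C_mul_log a)

lemma conj_lemma (L0 Lm1 : A) (hcomm : L0 * Lm1 - Lm1 * L0 = Lm1) :
    C Lm1 * oneSubXPow ℚ (-L0) = (1 - X) * (oneSubXPow ℚ (-L0) * C Lm1) := by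
  set I := invOneSubX A with hIdef
  set Q := oneSubXPow ℚ (-L0) with hQdef
  have hIc : ∀ f : PowerSeries A, Commute I f := fun f => isScalarPS_invOneSubX.commute f
  have hdQ : psDeriv Q = Q * (C L0 * I) := by
    rw [hQdef, psDeriv_oneSubXPow, map_neg]
    noncomm_ring
  have hQL0 : C L0 * Q = Q * C L0 :=
    (commute_C_psExp L0 (-L0) ((Commute.refl L0).neg_right) isScalarPS_psLogOneSub).eq
  have hswap : Lm1 * L0 = (L0 - 1) * Lm1 := by
    have h1 : (L0 - 1) * Lm1 = L0 * Lm1 - Lm1 := by noncomm_ring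
    have h2 : L0 * Lm1 = Lm1 + Lm1 * L0 := sub_eq_iff_eq_add.mp hcomm
    rw [h1, h2]
    noncomm_ring
  have hF : psDeriv (C Lm1 * Q) = (I * (C L0 - 1)) * (C Lm1 * Q) := by
    rw [psDeriv_C_mul, hdQ]
    calc C Lm1 * (Q * (C L0 * I))
        = (C Lm1 * (Q * C L0)) * I := by noncomm_ring
      _ = (C Lm1 * (C L0 * Q)) * I := by rw [hQL0]
      _ = ((C (Lm1 * L0)) * Q) * I := by rw [map_mul]; noncomm_ring
      _ = ((C ((L0 - 1) * Lm1)) * Q) * I := by rw [hswap]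
      _ = (I * (C L0 - 1)) * (C Lm1 * Q) := by
          rw [map_mul, map_sub, map_one, mul_assoc I (C L0 - 1) (C Lm1 * Q),
            (hIc ((C L0 - 1) * (C Lm1 * Q))).eq]
          noncomm_ring
  have hH : psDeriv ((1 - X) * (Q * C Lm1)) = (I * (C L0 - 1)) * ((1 - X) * (Q * C Lm1)) := by
    rw [psDeriv_mul, psDeriv_mul, psDeriv_C, mul_zero, add_zero, psDeriv_one_sub_X, hdQ]
    have e2 : (1 - X : PowerSeries A) * ((Q * (C L0 * I)) * C Lm1)
        = Q * (C L0 * C Lm1) := by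
      simp only [mul_assoc]
      rw [central_pull (fun f => isScalarPS_one_sub_X.commute f) Q,
        central_pull (fun f => isScalarPS_one_sub_X.commute f) (C L0),
        ← mul_assoc (1 - X : PowerSeries A) I (C Lm1), one_sub_X_mul_invOneSubX, one_mul]
    have e3 : (I * (C L0 - 1)) * ((1 - X) * (Q * C Lm1))
        = Q * (C L0 * C Lm1) - Q * C Lm1 := by
      calc (I * (C L0 - 1)) * ((1 - X) * (Q * C Lm1))
          = (C L0 - 1) * (I * ((1 - X) * (Q * C Lm1))) := by
            rw [mul_assoc, central_pull hIc]
        _ = (C L0 - 1) * (Q * C Lm1) := by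
            rw [← mul_assoc I (1 - X) (Q * C Lm1), invOneSubX_mul_one_sub_X, one_mul]
        _ = C L0 * Q * C Lm1 - Q * C Lm1 := by noncomm_ring
        _ = Q * (C L0 * C Lm1) - Q * C Lm1 := by rw [hQL0]; noncomm_ring
    rw [e3, ← e2]
    noncomm_ring
  have h0 : constantCoeff (C Lm1 * Q) = constantCoeff ((1 - X) * (Q * C Lm1)) := by
    rw [hQdef]
    simp [map_mul, map_sub, map_one, constantCoeff_oneSubXPow, constantCoeff_C, constantCoeff_X]
  exact ode_unique hF hH h0

end Aux

/-- Let `L(0), L(-1)` be elements of an associative `ℚ`-algebra with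
`[L(0), L(-1)] = L(-1)`, and `z` a central invertible scalar.  Then the formal
derivative in `x` of `(1-x)^{L(0) - z·L(-1)} · (1-x)^{-L(0)} · e^{-z·x·L(-1)}` is
zero; consequently this product equals `1`. -/
theorem deriv_oneSubXPow_product_eq_zero {A : Type*} [Ring A] [Algebra ℚ A]
    (z : A) (hzu : IsUnit z) (hzc : ∀ a : A, Commute z a) (L0 Lm1 : A)
    (hcomm : L0 * Lm1 - Lm1 * L0 = Lm1) :
    psDeriv (oneSubXPow ℚ (L0 - z * Lm1) * oneSubXPow ℚ (-L0) *
        psExp ℚ (PowerSeries.C (-(z * Lm1)) * PowerSeries.X)) = 0 ∧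
    oneSubXPow ℚ (L0 - z * Lm1) * oneSubXPow ℚ (-L0) *
        psExp ℚ (PowerSeries.C (-(z * Lm1)) * PowerSeries.X) = 1 := by
  set I := invOneSubX A with hIdef
  set P := oneSubXPow ℚ (L0 - z * Lm1) with hPdef
  set Q := oneSubXPow ℚ (-L0) with hQdef
  set E := psExp ℚ (C (-(z * Lm1)) * X) with hEdef
  have hIc : ∀ f : PowerSeries A, Commute I f := fun f => isScalarPS_invOneSubX.commute f
  have hzCc : ∀ f : PowerSeries A, Commute (C z) f := fun f =>
    commute_of_coeff_commute fun i j => by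
      rw [coeff_C]
      split
      · exact hzc _
      · exact Commute.zero_left _
  have hdP : psDeriv P = -(P * (C (L0 - z * Lm1) * I)) := by
    rw [hPdef, psDeriv_oneSubXPow]
    noncomm_ring
  have hdQ : psDeriv Q = Q * (C L0 * I) := by
    rw [hQdef, psDeriv_oneSubXPow, map_neg]
    noncomm_ring
  have hdE : psDeriv E = -(E * C (z * Lm1)) := by
    rw [hEdef, psDeriv_expE, map_neg]
    noncomm_ring
  have hQL0 : C L0 * Q = Q * C L0 :=
    (commute_C_psExp L0 (-L0) ((Commute.refl L0).neg_right) isScalarPS_psLogOneSub).eq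
  have hconj : C Lm1 * Q = (1 - X) * (Q * C Lm1) := conj_lemma L0 Lm1 hcomm
  have hEz : E * C (z * Lm1) = C (z * Lm1) * E := by
    rw [hEdef]
    exact (commute_C_psExp (z * Lm1) (-(z * Lm1)) ((Commute.refl _).neg_right)
      isScalarPS_X).eq.symm
  have key : C (L0 - z * Lm1) * Q = Q * C L0 - C z * ((1 - X) * (Q * C Lm1)) := by
    rw [map_sub, map_mul, sub_mul, mul_assoc (C z) (C Lm1) Q, hconj, hQL0]
  have c2 : (C z * ((1 - X) * (Q * C Lm1))) * I = C z * (Q * C Lm1) := by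
    rw [← (hIc (C z * ((1 - X) * (Q * C Lm1)))).eq, central_pull hIc,
      ← mul_assoc I (1 - X) (Q * C Lm1), invOneSubX_mul_one_sub_X, one_mul]
  have c1 : C (L0 - z * Lm1) * I * Q = Q * C L0 * I - C z * (Q * C Lm1) := by
    rw [mul_assoc, (hIc Q).eq, ← mul_assoc, key, sub_mul, c2]
  have t2 : P * (C z * (Q * C Lm1)) * E = P * Q * (C (z * Lm1) * E) := by
    rw [central_pull hzCc Q, map_mul]
    noncomm_ring
  have hderiv : psDeriv (P * Q * E) = 0 := by
    rw [psDeriv_mul, psDeriv_mul, hdP, hdQ, hdE, hEz]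
    have expand : (-(P * (C (L0 - z * Lm1) * I)) * Q + P * (Q * (C L0 * I))) * E
        + P * Q * -(C (z * Lm1) * E)
        = (-(P * (C (L0 - z * Lm1) * I * Q)) + P * (Q * (C L0 * I))) * E
        - P * Q * (C (z * Lm1) * E) := by noncomm_ring
    rw [expand, c1]
    have expand2 : (-(P * (Q * C L0 * I - C z * (Q * C Lm1))) + P * (Q * (C L0 * I))) * E
        - P * Q * (C (z * Lm1) * E)
        = P * (C z * (Q * C Lm1)) * E - P * Q * (C (z * Lm1) * E) := by noncomm_ring
    rw [expand2, t2, sub_self]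
  refine ⟨hderiv, ?_⟩
  have h1 : psDeriv (P * Q * E) = 0 * (P * Q * E) := by rw [hderiv, zero_mul]
  have h2 : psDeriv (1 : PowerSeries A) = 0 * 1 := by rw [psDeriv_one, zero_mul]
  refine ode_unique h1 h2 ?_
  rw [map_mul, map_mul, hPdef, hQdef, hEdef, constantCoeff_oneSubXPow,
    constantCoeff_oneSubXPow, constantCoeff_psExp (by rw [map_mul, constantCoeff_X, mul_zero])]
  simp
end

section
/- Formal δ-function identity: in the space of formal Laurent series in commuting variables x_0, x_1, x_2, y_1, y_2, z, one has x_1^{-1} δ((y_1-z)/x_1) · x_2^{-1} δ((y_2-z)/x_2) · y_2^{-1} δ((y_1-x_0)/y_2) = y_1^{-1} δ((x_1+z)/y_1) · x_2^{-1} δ((y_2-z)/x_2) · x_2^{-1} δ((x_1-x_0)/x_2), where δ(x) = ∑_{n∈Z} x^n and binomial expressions (a±b)^n for n∈Z are expanded in nonnegative powers of the second summand. -/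
/-- Generalized binomial coefficient `C(a, k) = a(a-1)⋯(a-k+1)/k!` for `a ∈ ℤ`. -/
noncomputable def gchoose (a : ℤ) (k : ℕ) : ℚ :=
  (∏ i ∈ Finset.range k, ((a : ℚ) - i)) / k.factorial

/-- Coefficient of `u^p v^q` in `(u + s·v)^n` (`n ∈ ℤ`), expanded in nonnegative
powers of `v`. -/
noncomputable def expCoeff (n p q : ℤ) (s : ℚ) : ℚ :=
  if 0 ≤ q ∧ p = n - q then gchoose n q.toNat * s ^ q.toNat else 0

noncomputable def qch (x : ℚ) (k : ℕ) : ℚ := (∏ i ∈ Finset.range k, (x - i)) / k.factorial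

open Finset Polynomial

lemma descPochhammer_smeval_eq_prod (x : ℚ) : ∀ k : ℕ,
    (descPochhammer ℤ k).smeval x = ∏ i ∈ Finset.range k, (x - i)
  | 0 => by simp [descPochhammer_zero, Polynomial.smeval_one]
  | (k+1) => by
    rw [descPochhammer_succ_right, Polynomial.smeval_mul, descPochhammer_smeval_eq_prod x k,
      prod_range_succ, Polynomial.smeval_sub, Polynomial.smeval_X, Polynomial.smeval_natCast]
    simp

lemma qch_eq_ringChoose (x : ℚ) (k : ℕ) : qch x k = Ring.choose x k := by
  have h := Ring.descPochhammer_eq_factorial_smul_choose x k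
  rw [descPochhammer_smeval_eq_prod, nsmul_eq_mul] at h
  have hk : (k.factorial : ℚ) ≠ 0 := by exact_mod_cast k.factorial_ne_zero
  rw [qch, h]
  field_simp

lemma qch_zero (x : ℚ) : qch x 0 = 1 := by simp [qch]

lemma qch_natCast (m k : ℕ) : qch (m : ℚ) k = m.choose k := by
  rw [qch_eq_ringChoose, Ring.choose_natCast]

lemma qch_V (x y : ℚ) (n : ℕ) :
    qch (x + y) n = ∑ k ∈ range (n+1), qch x k * qch y (n - k) := by
  simp only [qch_eq_ringChoose]
  rw [Ring.add_choose_eq n (Commute.all x y)]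
  exact Finset.Nat.sum_antidiagonal_eq_sum_range_succ
    (fun i j => Ring.choose x i * Ring.choose y j) n

lemma qch_T (x : ℚ) (a b : ℕ) :
    qch x a * qch (x - a) b = qch x (a + b) * ((a+b).choose a : ℚ) := by
  simp only [qch_eq_ringChoose]
  have h := Ring.choose_smul_choose x (Nat.le_add_right a b)
  rw [nsmul_eq_mul, Nat.add_sub_cancel_left] at h
  rw [← h]; ring

lemma qch_neg (x : ℚ) (k : ℕ) : qch ((k:ℚ) - 1 - x) k = (-1)^k * qch x k := by
  unfold qch
  rw [← Finset.prod_range_reflect (fun i => ((k:ℚ) - 1 - x) - i) k]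
  have h : ∀ j ∈ range k, ((k:ℚ) - 1 - x) - ((k - 1 - j : ℕ) : ℚ) = (-1) * (x - j) := by
    intro j hj
    rw [mem_range] at hj
    have h1 : j ≤ k - 1 := Nat.le_sub_one_of_lt hj
    have h2 : (1:ℕ) ≤ k := Nat.one_le_of_lt (Nat.lt_of_le_of_lt (Nat.zero_le j) hj)
    push_cast [Nat.cast_sub h1, Nat.cast_sub h2]
    ring
  rw [Finset.prod_congr rfl h, Finset.prod_mul_distrib, Finset.prod_const, card_range]
  ring

lemma sum_triangle' {M : Type*} [AddCommMonoid M] (n : ℕ) (f : ℕ → ℕ → M) :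
    ∑ j ∈ range (n+1), ∑ a ∈ range (j+1), f j a
      = ∑ k ∈ range (n+1), ∑ b ∈ range ((n-k)+1), f (k+b) b := by
  rw [Finset.sum_sigma', Finset.sum_sigma']
  refine Finset.sum_nbij' (i := fun x => (⟨x.1 - x.2, x.2⟩ : Σ _ : ℕ, ℕ))
    (j := fun x => (⟨x.1 + x.2, x.2⟩ : Σ _ : ℕ, ℕ)) ?_ ?_ ?_ ?_ ?_
  · rintro ⟨a, b⟩ h
    simp only [Finset.mem_sigma, Finset.mem_range, Nat.lt_succ_iff] at h ⊢
    omega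
  · rintro ⟨a, b⟩ h
    simp only [Finset.mem_sigma, Finset.mem_range, Nat.lt_succ_iff] at h ⊢
    omega
  · rintro ⟨a, b⟩ h
    simp only [Finset.mem_sigma, Finset.mem_range, Nat.lt_succ_iff] at h
    have : a - b + b = a := by omega
    simp [this]
  · rintro ⟨a, b⟩ h
    simp only [Finset.mem_sigma, Finset.mem_range, Nat.lt_succ_iff] at h
    have : a + b - b = a := by omega
    simp [this]
  · rintro ⟨a, b⟩ h
    simp only [Finset.mem_sigma, Finset.mem_range, Nat.lt_succ_iff] at h
    have : a - b + b = a := by omega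
    simp [this]

lemma filter_range_le (n m : ℕ) :
    (range (n+1)).filter (fun a => a ≤ m) = range (min n m + 1) := by
  ext x
  simp only [mem_filter, mem_range, Nat.lt_succ_iff]
  omega

lemma qch_VN (x : ℚ) (m n : ℕ) :
    qch (x + m) n = ∑ k ∈ range (n+1), qch x (n-k) * (m.choose k : ℚ) := by
  rw [qch_V x m n, ← Finset.sum_range_reflect]
  refine Finset.sum_congr rfl ?_
  intro j hj
  rw [mem_range, Nat.lt_succ_iff] at hj
  rw [Nat.add_sub_cancel, Nat.sub_sub_self hj, qch_natCast]

lemma qch_inner (A B : ℚ) (g j : ℕ) (hj : j ≤ g) :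
    ∑ γ ∈ range (g+1), qch A γ * (γ.choose j : ℚ) * qch B (g-γ)
      = qch A j * qch (A + B - j) (g - j) := by
  have hsplit := Finset.sum_Ico_consecutive (f := fun γ => qch A γ * (γ.choose j : ℚ) * qch B (g-γ))
    (Nat.zero_le j) (Nat.le_succ_of_le hj)
  rw [← Finset.range_eq_Ico] at hsplit
  have h0 : ∑ γ ∈ Finset.range j, qch A γ * (γ.choose j : ℚ) * qch B (g-γ) = 0 := by
    apply Finset.sum_eq_zero
    intro γ hγ
    rw [Finset.mem_range] at hγ
    rw [Nat.choose_eq_zero_of_lt hγ]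
    simp
  rw [← Finset.range_eq_Ico, Nat.succ_eq_add_one] at hsplit
  rw [← hsplit, h0, zero_add, Finset.sum_Ico_eq_sum_range]
  have hlen : g + 1 - j = (g - j) + 1 := by omega
  rw [hlen]
  have hterm : ∀ i ∈ range ((g-j)+1),
      qch A (j+i) * (((j+i).choose j : ℕ) : ℚ) * qch B (g-(j+i))
        = qch A j * (qch (A - j) i * qch B ((g-j)-i)) := by
    intro i hi
    have := qch_T A j i
    rw [← this]
    have : g - (j+i) = (g-j) - i := by omega
    rw [this]; ring
  rw [Finset.sum_congr rfl hterm, ← Finset.mul_sum, ← qch_V (A - j) B (g-j)]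
  ring_nf

lemma qch_phi (A B M : ℚ) (g e0 : ℕ) :
    ∑ γ ∈ range (g+1), qch A γ * qch B (g-γ) * qch (M+γ) e0
      = ∑ j ∈ range (e0+1), qch M (e0-j) *
          (if j ≤ g then qch A j * qch (A+B-j) (g-j) else 0) := by
  have h1 : ∀ γ ∈ range (g+1), qch A γ * qch B (g-γ) * qch (M+γ) e0
      = ∑ j ∈ range (e0+1), qch M (e0-j) * (qch A γ * (γ.choose j : ℚ) * qch B (g-γ)) := by
    intro γ _
    rw [qch_VN M γ e0, Finset.mul_sum]
    exact Finset.sum_congr rfl (fun j _ => by ring)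
  rw [Finset.sum_congr rfl h1, Finset.sum_comm]
  refine Finset.sum_congr rfl ?_
  intro j hj
  rw [← Finset.mul_sum]
  by_cases hjg : j ≤ g
  · rw [if_pos hjg, qch_inner A B g j hjg]
  · rw [if_neg hjg]
    rw [Finset.sum_eq_zero, mul_zero]
    intro γ hγ
    rw [mem_range, Nat.lt_succ_iff] at hγ
    rw [Nat.choose_eq_zero_of_lt (by omega)]
    simp

lemma qch_sumChoose (E : ℕ) (Y : ℚ) (k m : ℕ) :
    ∑ a ∈ range (E+1), (E.choose a : ℚ) * (if k + a ≤ m then qch Y (m-(k+a)) else 0)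
      = if k ≤ m then qch (Y + E) (m-k) else 0 := by
  by_cases hk : k ≤ m
  · rw [if_pos hk]
    have hstep : ∀ a, (k + a ≤ m) = (a ≤ m - k) := by intro a; rw [eq_iff_iff]; omega
    have hsub : ∀ a, m - (k+a) = (m-k) - a := by intro a; omega
    simp only [hstep, hsub]
    have h1 : ∑ a ∈ range (E+1), (E.choose a : ℚ) * (if a ≤ m-k then qch Y (m-k-a) else 0)
        = ∑ a ∈ range (min E (m-k) + 1), (E.choose a : ℚ) * qch Y (m-k-a) := by
      rw [← filter_range_le E (m-k), sum_filter]
      refine sum_congr rfl (fun a _ => ?_)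
      split_ifs <;> simp
    have h2 : ∑ a ∈ range ((m-k)+1), qch (E:ℚ) a * qch Y (m-k-a)
        = ∑ a ∈ range (min E (m-k) + 1), (E.choose a : ℚ) * qch Y (m-k-a) := by
      rw [min_comm E (m-k), ← filter_range_le (m-k) E, sum_filter]
      refine sum_congr rfl (fun a _ => ?_)
      rw [qch_natCast]
      split_ifs with h
      · rfl
      · rw [Nat.choose_eq_zero_of_lt (by omega)]; simp
    rw [h1, ← h2, add_comm Y (E:ℚ), ← qch_V]
  · rw [if_neg hk]
    refine sum_eq_zero (fun a _ => ?_)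
    rw [if_neg (by omega)]
    simp

lemma qch_stepII (Cq M : ℚ) (e0 m : ℕ) :
    ∑ j ∈ range (e0+1), qch M (e0-j) *
        (if j ≤ m then qch (Cq+M-e0+j) j * qch (Cq-e0) (m-j) else 0)
      = qch Cq m * qch (M+m) e0 := by
  have hexp : ∀ j ∈ range (e0+1),
      qch M (e0-j) * (if j ≤ m then qch (Cq+M-e0+j) j * qch (Cq-e0) (m-j) else 0)
        = ∑ a ∈ range (j+1), (if j ≤ m then
            qch M ((e0-j)+a) * ((((e0-j)+a).choose (e0-j) : ℕ) : ℚ)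
              * qch Cq (j-a) * qch (Cq-e0) (m-j) else 0) := by
    intro j hj
    rw [mem_range, Nat.lt_succ_iff] at hj
    by_cases hjm : j ≤ m
    · simp only [if_pos hjm]
      have hcast : Cq + M - e0 + j = (M - ((e0-j : ℕ) : ℚ)) + Cq := by
        rw [Nat.cast_sub hj]; push_cast; ring
      rw [hcast, qch_V (M - ((e0-j:ℕ):ℚ)) Cq j, sum_mul, mul_sum]
      refine sum_congr rfl (fun a _ => ?_)
      have ht := qch_T M (e0-j) a
      calc qch M (e0-j) * (qch (M - ((e0-j:ℕ):ℚ)) a * qch Cq (j-a) * qch (Cq-↑e0) (m-j))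
          = (qch M (e0-j) * qch (M - ((e0-j:ℕ):ℚ)) a) * (qch Cq (j-a) * qch (Cq-↑e0) (m-j)) := by
            ring
        _ = _ := by rw [ht]; ring
    · simp only [if_neg hjm, mul_zero, sum_const_zero]
  rw [sum_congr rfl hexp, sum_triangle' e0]
  have hmid : ∀ k ∈ range (e0+1),
      (∑ b ∈ range ((e0-k)+1), (if k+b ≤ m then
          qch M ((e0-(k+b))+b) * ((((e0-(k+b))+b).choose (e0-(k+b)) : ℕ) : ℚ)
            * qch Cq ((k+b)-b) * qch (Cq-e0) (m-(k+b)) else 0))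
        = qch M (e0-k) * qch Cq k *
            ∑ b ∈ range ((e0-k)+1), ((e0-k).choose b : ℚ) *
              (if k + b ≤ m then qch (Cq-e0) (m-(k+b)) else 0) := by
    intro k hk
    rw [mem_range, Nat.lt_succ_iff] at hk
    rw [mul_sum]
    refine sum_congr rfl (fun b hb => ?_)
    rw [mem_range, Nat.lt_succ_iff] at hb
    have h1 : e0 - (k+b) + b = e0 - k := by omega
    have h2 : (k+b) - b = k := by omega
    have h3 : e0 - (k+b) = (e0-k) - b := by omega
    have h4 : (e0-k).choose ((e0-k)-b) = (e0-k).choose b := Nat.choose_symm hb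
    rw [h1, h2, h3, h4]
    split_ifs <;> ring
  rw [sum_congr rfl hmid]
  have hfin : ∀ k ∈ range (e0+1),
      qch M (e0-k) * qch Cq k *
          (∑ b ∈ range ((e0-k)+1), ((e0-k).choose b : ℚ) *
            (if k + b ≤ m then qch (Cq-e0) (m-(k+b)) else 0))
        = qch Cq m * (qch M (e0-k) * (m.choose k : ℚ)) := by
    intro k hk
    rw [mem_range, Nat.lt_succ_iff] at hk
    rw [qch_sumChoose (e0-k) (Cq-e0) k m]
    by_cases hkm : k ≤ m
    · rw [if_pos hkm]
      have hc : Cq - e0 + ((e0-k:ℕ):ℚ) = Cq - k := by rw [Nat.cast_sub hk]; push_cast; ring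
      rw [hc]
      have ht := qch_T Cq k (m-k)
      have hm : k + (m-k) = m := by omega
      rw [hm] at ht
      calc qch M (e0-k) * qch Cq k * qch (Cq - k) (m-k)
          = qch M (e0-k) * (qch Cq k * qch (Cq - (k:ℚ)) (m-k)) := by ring
        _ = qch M (e0-k) * (qch Cq m * (m.choose k : ℚ)) := by rw [ht]
        _ = _ := by ring
    · rw [if_neg hkm, Nat.choose_eq_zero_of_lt (by omega)]
      simp
  rw [sum_congr rfl hfin, ← mul_sum, ← qch_VN M m e0]

lemma qch_core (G E0 : ℕ) (A B C D M : ℚ)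
    (hB : B = E0 + G - 1 - A - C - D) (hM : M = E0 - 1 - A - C) :
    (-1)^G * ∑ γ ∈ range (G+1), qch A γ * qch B (G-γ) * qch (M+γ) E0
      = ∑ γ ∈ range (G+1), qch C γ * qch D (G-γ) * qch (M+γ) E0 := by
  rw [qch_phi A B M G E0, mul_sum]
  have step3 : ∀ j ∈ range (E0+1),
      (-1)^G * (qch M (E0-j) * (if j ≤ G then qch A j * qch (A+B-j) (G-j) else 0))
        = ∑ i ∈ range (G+1), (if j + i ≤ G then
            qch M (E0-j) * qch ((C+M-E0)+j) j * qch D i * qch (C-E0) (G-j-i) else 0) := by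
    intro j _
    by_cases hjG : j ≤ G
    · rw [if_pos hjG]
      have hsign : ((-1:ℚ))^G = (-1)^j * (-1)^(G-j) := by
        rw [← pow_add]; congr 1; omega
      have hn1 : qch ((C+M-E0)+j) j = (-1)^j * qch A j := by
        have : (C+M-(E0:ℚ))+j = (j:ℚ) - 1 - A := by rw [hM]; ring
        rw [this, qch_neg]
      have hn2 : qch (C+D-E0) (G-j) = (-1)^(G-j) * qch (A+B-j) (G-j) := by
        have : C+D-(E0:ℚ) = ((G-j:ℕ):ℚ) - 1 - (A+B-j) := by
          rw [Nat.cast_sub hjG, hB]; ring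
        rw [this, qch_neg]
      have hexp : qch (C+D-E0) (G-j) = ∑ i ∈ range ((G-j)+1), qch D i * qch (C-E0) ((G-j)-i) := by
        have : C+D-(E0:ℚ) = D + (C-E0) := by ring
        rw [this, qch_V]
      have key : (-1)^G * (qch M (E0-j) * (qch A j * qch (A+B-j) (G-j)))
          = qch M (E0-j) * qch ((C+M-E0)+j) j * qch (C+D-E0) (G-j) := by
        rw [hn1, hn2, hsign]; ring
      rw [key, hexp, mul_sum,
        ← Finset.sum_subset (Finset.range_subset_range.2 (by omega : (G-j)+1 ≤ G+1))
          (fun i hiG hin => by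
            rw [mem_range, Nat.lt_succ_iff] at hiG
            rw [mem_range, Nat.lt_succ_iff, not_le] at hin
            rw [if_neg (by omega)])]
      refine sum_congr rfl (fun i hi => ?_)
      rw [mem_range, Nat.lt_succ_iff] at hi
      rw [if_pos (by omega)]
      ring
    · rw [if_neg hjG, mul_zero, mul_zero]
      rw [eq_comm]
      refine sum_eq_zero (fun i _ => ?_)
      rw [if_neg (by omega)]
  rw [sum_congr rfl step3, sum_comm]
  have step5 : ∀ i ∈ range (G+1),
      (∑ j ∈ range (E0+1), (if j + i ≤ G then
          qch M (E0-j) * qch ((C+M-E0)+j) j * qch D i * qch (C-E0) (G-j-i) else 0))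
        = qch D i * (qch C (G-i) * qch (M+((G-i:ℕ):ℚ)) E0) := by
    intro i hi
    rw [mem_range, Nat.lt_succ_iff] at hi
    rw [← qch_stepII C M E0 (G-i), mul_sum]
    refine sum_congr rfl (fun j hj => ?_)
    rw [mem_range, Nat.lt_succ_iff] at hj
    by_cases hji : j + i ≤ G
    · rw [if_pos hji, if_pos (by omega : j ≤ G-i)]
      have h1 : G-j-i = (G-i)-j := by omega
      have h2 : C+M-(E0:ℚ)+j = C+M-E0+j := rfl
      rw [h1]
      ring
    · rw [if_neg hji, if_neg (by omega), mul_zero, mul_zero]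
  rw [sum_congr rfl step5, ← Finset.sum_range_reflect]
  refine sum_congr rfl (fun γ hγ => ?_)
  rw [mem_range, Nat.lt_succ_iff] at hγ
  have h1 : G + 1 - 1 - γ = G - γ := rfl
  have h2 : G - (G - γ) = γ := by omega
  rw [h1, h2]
  push_cast
  ring

lemma gchoose_eq (a : ℤ) (k : ℕ) : gchoose a k = qch (a:ℚ) k := rfl

/-- Formal δ-function identity
`x₁⁻¹ δ((y₁-z)/x₁) · x₂⁻¹ δ((y₂-z)/x₂) · y₂⁻¹ δ((y₁-x₀)/y₂)
 = y₁⁻¹ δ((x₁+z)/y₁) · x₂⁻¹ δ((y₂-z)/x₂) · x₂⁻¹ δ((x₁-x₀)/x₂)`,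
where `δ(x) = ∑_{n∈ℤ} xⁿ` and binomials `(a±b)ⁿ` (`n ∈ ℤ`) are expanded in
nonnegative powers of the second summand.  Stated coefficientwise: for each
monomial `x₀^{e₀} x₁^{e₁} x₂^{e₂} y₁^{f₁} y₂^{f₂} z^{g}`, the coefficients of the
two sides (each a convolution over the exponents of the shared variables)
coincide. -/
theorem delta_three_factor_identity_I :
    ∀ e0 e1 e2 f1 f2 g : ℤ,
      (∑ᶠ (β1 : ℤ) (β2 : ℤ) (γ1 : ℤ),
        expCoeff (-e1 - 1) β1 γ1 (-1) * expCoeff (-e2 - 1) β2 (g - γ1) (-1) *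
          expCoeff (-(f2 - β2) - 1) (f1 - β1) e0 (-1))
      = ∑ᶠ (α : ℤ) (a : ℤ) (γ : ℤ),
          expCoeff (-f1 - 1) α γ 1 * expCoeff (-a - 1) f2 (g - γ) (-1) *
            expCoeff (-(e2 - a) - 1) (e1 - α) e0 (-1) := by
  intro e0 e1 e2 f1 f2 g
  -- collapse the two inner finsums on the left
  have hLin : ∀ β1 : ℤ, (∑ᶠ (β2 : ℤ) (γ1 : ℤ),
      expCoeff (-e1 - 1) β1 γ1 (-1) * expCoeff (-e2 - 1) β2 (g - γ1) (-1) *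
        expCoeff (-(f2 - β2) - 1) (f1 - β1) e0 (-1))
      = expCoeff (-e1 - 1) β1 (-e1-1-β1) (-1) *
          expCoeff (-e2 - 1) (-e2-1-(g-(-e1-1-β1))) (g - (-e1-1-β1)) (-1) *
          expCoeff (-(f2 - (-e2-1-(g-(-e1-1-β1)))) - 1) (f1 - β1) e0 (-1) := by
    intro β1
    have h1 : ∀ β2 : ℤ, (∑ᶠ (γ1 : ℤ),
        expCoeff (-e1 - 1) β1 γ1 (-1) * expCoeff (-e2 - 1) β2 (g - γ1) (-1) *
          expCoeff (-(f2 - β2) - 1) (f1 - β1) e0 (-1))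
        = expCoeff (-e1 - 1) β1 (-e1-1-β1) (-1) *
            expCoeff (-e2 - 1) β2 (g - (-e1-1-β1)) (-1) *
            expCoeff (-(f2 - β2) - 1) (f1 - β1) e0 (-1) := by
      intro β2
      apply finsum_eq_single
      intro γ1 hγ1
      have : expCoeff (-e1 - 1) β1 γ1 (-1) = 0 := by
        rw [expCoeff, if_neg]
        rintro ⟨-, h⟩
        exact hγ1 (by omega)
      rw [this, zero_mul, zero_mul]
    rw [finsum_congr h1]
    apply finsum_eq_single
    intro β2 hβ2
    have : expCoeff (-e2 - 1) β2 (g - (-e1-1-β1)) (-1) = 0 := by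
      rw [expCoeff, if_neg]
      rintro ⟨-, h⟩
      exact hβ2 (by omega)
    rw [this, mul_zero, zero_mul]
  -- collapse the two inner finsums on the right
  have hRin : ∀ α : ℤ, (∑ᶠ (a : ℤ) (γ : ℤ),
      expCoeff (-f1 - 1) α γ 1 * expCoeff (-a - 1) f2 (g - γ) (-1) *
        expCoeff (-(e2 - a) - 1) (e1 - α) e0 (-1))
      = expCoeff (-f1 - 1) α (-f1-1-α) 1 *
          expCoeff (-(-f2-1-(g-(-f1-1-α))) - 1) f2 (g - (-f1-1-α)) (-1) *
          expCoeff (-(e2 - (-f2-1-(g-(-f1-1-α)))) - 1) (e1 - α) e0 (-1) := by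
    intro α
    have h1 : ∀ a : ℤ, (∑ᶠ (γ : ℤ),
        expCoeff (-f1 - 1) α γ 1 * expCoeff (-a - 1) f2 (g - γ) (-1) *
          expCoeff (-(e2 - a) - 1) (e1 - α) e0 (-1))
        = expCoeff (-f1 - 1) α (-f1-1-α) 1 *
            expCoeff (-a - 1) f2 (g - (-f1-1-α)) (-1) *
            expCoeff (-(e2 - a) - 1) (e1 - α) e0 (-1) := by
      intro a
      apply finsum_eq_single
      intro γ hγ
      have : expCoeff (-f1 - 1) α γ 1 = 0 := by
        rw [expCoeff, if_neg]
        rintro ⟨-, h⟩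
        exact hγ (by omega)
      rw [this, zero_mul, zero_mul]
    rw [finsum_congr h1]
    apply finsum_eq_single
    intro a ha
    have : expCoeff (-a - 1) f2 (g - (-f1-1-α)) (-1) = 0 := by
      rw [expCoeff, if_neg]
      rintro ⟨-, h⟩
      exact ha (by omega)
    rw [this, mul_zero, zero_mul]
  rw [finsum_congr hLin, finsum_congr hRin]
  by_cases hcond : 0 ≤ e0 ∧ 0 ≤ g ∧ e0+e1+e2+f1+f2+g+3 = 0
  case neg =>
    have hL0 : ∀ β1 : ℤ, expCoeff (-e1 - 1) β1 (-e1-1-β1) (-1) *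
        expCoeff (-e2 - 1) (-e2-1-(g-(-e1-1-β1))) (g - (-e1-1-β1)) (-1) *
        expCoeff (-(f2 - (-e2-1-(g-(-e1-1-β1)))) - 1) (f1 - β1) e0 (-1) = 0 := by
      intro β1
      by_cases h1 : 0 ≤ -e1-1-β1
      · by_cases h2 : 0 ≤ g - (-e1-1-β1)
        · have : expCoeff (-(f2 - (-e2-1-(g-(-e1-1-β1)))) - 1) (f1 - β1) e0 (-1) = 0 := by
            rw [expCoeff, if_neg]
            rintro ⟨h3, h4⟩
            exact hcond ⟨h3, by omega, by omega⟩
          rw [this, mul_zero]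
        · have : expCoeff (-e2 - 1) (-e2-1-(g-(-e1-1-β1))) (g - (-e1-1-β1)) (-1) = 0 := by
            rw [expCoeff, if_neg]
            rintro ⟨h3, -⟩
            exact h2 h3
          rw [this, mul_zero, zero_mul]
      · have : expCoeff (-e1 - 1) β1 (-e1-1-β1) (-1) = 0 := by
          rw [expCoeff, if_neg]
          rintro ⟨h3, -⟩
          exact h1 h3
        rw [this, zero_mul, zero_mul]
    have hR0 : ∀ α : ℤ, expCoeff (-f1 - 1) α (-f1-1-α) 1 *
        expCoeff (-(-f2-1-(g-(-f1-1-α))) - 1) f2 (g - (-f1-1-α)) (-1) *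
        expCoeff (-(e2 - (-f2-1-(g-(-f1-1-α)))) - 1) (e1 - α) e0 (-1) = 0 := by
      intro α
      by_cases h1 : 0 ≤ -f1-1-α
      · by_cases h2 : 0 ≤ g - (-f1-1-α)
        · have : expCoeff (-(e2 - (-f2-1-(g-(-f1-1-α)))) - 1) (e1 - α) e0 (-1) = 0 := by
            rw [expCoeff, if_neg]
            rintro ⟨h3, h4⟩
            exact hcond ⟨h3, by omega, by omega⟩
          rw [this, mul_zero]
        · have : expCoeff (-(-f2-1-(g-(-f1-1-α))) - 1) f2 (g - (-f1-1-α)) (-1) = 0 := by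
            rw [expCoeff, if_neg]
            rintro ⟨h3, -⟩
            exact h2 h3
          rw [this, mul_zero, zero_mul]
      · have : expCoeff (-f1 - 1) α (-f1-1-α) 1 = 0 := by
          rw [expCoeff, if_neg]
          rintro ⟨h3, -⟩
          exact h1 h3
        rw [this, zero_mul, zero_mul]
    simp only [hL0, hR0, finsum_zero]
  case pos =>
    obtain ⟨he0, hg, hE⟩ := hcond
    set G := g.toNat with hGdef
    set E0n := e0.toNat with hE0def
    have hgG : (G:ℤ) = g := Int.toNat_of_nonneg hg
    have he0E : (E0n:ℤ) = e0 := Int.toNat_of_nonneg he0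
    -- turn both finsums into finite sums over γ ∈ range (G+1)
    have hLsum : (∑ᶠ (β1 : ℤ), expCoeff (-e1 - 1) β1 (-e1-1-β1) (-1) *
        expCoeff (-e2 - 1) (-e2-1-(g-(-e1-1-β1))) (g - (-e1-1-β1)) (-1) *
        expCoeff (-(f2 - (-e2-1-(g-(-e1-1-β1)))) - 1) (f1 - β1) e0 (-1))
        = ∑ γ ∈ range (G+1), (expCoeff (-e1 - 1) (-e1-1-(γ:ℤ)) (-e1-1-(-e1-1-(γ:ℤ))) (-1) *
            expCoeff (-e2 - 1) (-e2-1-(g-(-e1-1-(-e1-1-(γ:ℤ))))) (g - (-e1-1-(-e1-1-(γ:ℤ)))) (-1) *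
            expCoeff (-(f2 - (-e2-1-(g-(-e1-1-(-e1-1-(γ:ℤ)))))) - 1) (f1 - (-e1-1-(γ:ℤ))) e0 (-1)) := by
      rw [finsum_eq_finset_sum_of_support_subset _
        (s := (range (G+1)).image (fun γ : ℕ => -e1-1-(γ:ℤ)))]
      · rw [Finset.sum_image (by intro x _ y _ h; have h' : -e1-1-(x:ℤ) = -e1-1-(y:ℤ) := h; omega)]
      · intro β1 hβ1
        simp only [Function.mem_support] at hβ1
        have h1 : 0 ≤ -e1-1-β1 := by
          by_contra h1
          apply hβ1
          have : expCoeff (-e1 - 1) β1 (-e1-1-β1) (-1) = 0 := by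
            rw [expCoeff, if_neg]; rintro ⟨h3, -⟩; exact h1 h3
          rw [this, zero_mul, zero_mul]
        have h2 : 0 ≤ g - (-e1-1-β1) := by
          by_contra h2
          apply hβ1
          have : expCoeff (-e2 - 1) (-e2-1-(g-(-e1-1-β1))) (g - (-e1-1-β1)) (-1) = 0 := by
            rw [expCoeff, if_neg]; rintro ⟨h3, -⟩; exact h2 h3
          rw [this, mul_zero, zero_mul]
        simp only [Finset.coe_image, Set.mem_image, Finset.mem_coe, Finset.mem_range]
        exact ⟨(-e1-1-β1).toNat, by omega, by omega⟩
    have hRsum : (∑ᶠ (α : ℤ), expCoeff (-f1 - 1) α (-f1-1-α) 1 *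
        expCoeff (-(-f2-1-(g-(-f1-1-α))) - 1) f2 (g - (-f1-1-α)) (-1) *
        expCoeff (-(e2 - (-f2-1-(g-(-f1-1-α)))) - 1) (e1 - α) e0 (-1))
        = ∑ γ ∈ range (G+1), (expCoeff (-f1 - 1) (-f1-1-(γ:ℤ)) (-f1-1-(-f1-1-(γ:ℤ))) 1 *
            expCoeff (-(-f2-1-(g-(-f1-1-(-f1-1-(γ:ℤ))))) - 1) f2 (g - (-f1-1-(-f1-1-(γ:ℤ)))) (-1) *
            expCoeff (-(e2 - (-f2-1-(g-(-f1-1-(-f1-1-(γ:ℤ)))))) - 1) (e1 - (-f1-1-(γ:ℤ))) e0 (-1)) := by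
      rw [finsum_eq_finset_sum_of_support_subset _
        (s := (range (G+1)).image (fun γ : ℕ => -f1-1-(γ:ℤ)))]
      · rw [Finset.sum_image (by intro x _ y _ h; have h' : -f1-1-(x:ℤ) = -f1-1-(y:ℤ) := h; omega)]
      · intro α hα
        simp only [Function.mem_support] at hα
        have h1 : 0 ≤ -f1-1-α := by
          by_contra h1
          apply hα
          have : expCoeff (-f1 - 1) α (-f1-1-α) 1 = 0 := by
            rw [expCoeff, if_neg]; rintro ⟨h3, -⟩; exact h1 h3
          rw [this, zero_mul, zero_mul]
        have h2 : 0 ≤ g - (-f1-1-α) := by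
          by_contra h2
          apply hα
          have : expCoeff (-(-f2-1-(g-(-f1-1-α))) - 1) f2 (g - (-f1-1-α)) (-1) = 0 := by
            rw [expCoeff, if_neg]; rintro ⟨h3, -⟩; exact h2 h3
          rw [this, mul_zero, zero_mul]
        simp only [Finset.coe_image, Set.mem_image, Finset.mem_coe, Finset.mem_range]
        exact ⟨(-f1-1-α).toNat, by omega, by omega⟩
    rw [hLsum, hRsum]
    -- termwise evaluation, LHS
    have hLev : ∀ γ ∈ range (G+1),
        (expCoeff (-e1 - 1) (-e1-1-(γ:ℤ)) (-e1-1-(-e1-1-(γ:ℤ))) (-1) *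
          expCoeff (-e2 - 1) (-e2-1-(g-(-e1-1-(-e1-1-(γ:ℤ))))) (g - (-e1-1-(-e1-1-(γ:ℤ)))) (-1) *
          expCoeff (-(f2 - (-e2-1-(g-(-e1-1-(-e1-1-(γ:ℤ)))))) - 1) (f1 - (-e1-1-(γ:ℤ))) e0 (-1))
        = (-1:ℚ)^E0n * ((-1:ℚ)^G *
            (qch (-(e1:ℚ)-1) γ * qch (-(e2:ℚ)-1) (G-γ) *
              qch ((e0:ℚ)+(e1:ℚ)+(f1:ℚ)+1+(γ:ℚ)) E0n)) := by
      intro γ hγ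
      rw [mem_range, Nat.lt_succ_iff] at hγ
      have h0 : -e1-1-(-e1-1-(γ:ℤ)) = (γ:ℤ) := by ring
      rw [h0]
      have h2 : g - (γ:ℤ) = ((G-γ : ℕ):ℤ) := by omega
      rw [h2]
      have h3 : -(f2 - (-e2-1-((G-γ:ℕ):ℤ))) - 1 = e0+e1+f1+1+(γ:ℤ) := by omega
      rw [h3]
      have F1 : expCoeff (-e1 - 1) (-e1-1-(γ:ℤ)) (γ:ℤ) (-1)
          = gchoose (-e1-1) γ * (-1)^γ := by
        rw [expCoeff, if_pos ⟨Int.natCast_nonneg γ, by ring⟩, Int.toNat_natCast]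
      have F2 : expCoeff (-e2 - 1) (-e2-1-((G-γ:ℕ):ℤ)) ((G-γ:ℕ):ℤ) (-1)
          = gchoose (-e2-1) (G-γ) * (-1)^(G-γ) := by
        rw [expCoeff, if_pos ⟨Int.natCast_nonneg _, by ring⟩, Int.toNat_natCast]
      have F3 : expCoeff (e0+e1+f1+1+(γ:ℤ)) (f1 - (-e1-1-(γ:ℤ))) e0 (-1)
          = gchoose (e0+e1+f1+1+(γ:ℤ)) E0n * (-1)^E0n := by
        rw [expCoeff, if_pos ⟨he0, by ring⟩, hE0def]
      rw [F1, F2, F3, gchoose_eq, gchoose_eq, gchoose_eq]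
      have hsign : ((-1:ℚ))^γ * (-1)^(G-γ) = (-1)^G := by
        rw [← pow_add]; congr 1; omega
      push_cast
      linear_combination (qch (-(e1:ℚ)-1) γ * qch (-(e2:ℚ)-1) (G-γ) *
        qch ((e0:ℚ)+(e1:ℚ)+(f1:ℚ)+1+(γ:ℚ)) E0n * (-1:ℚ)^E0n) * hsign
    -- termwise evaluation, RHS
    have hRev : ∀ γ ∈ range (G+1),
        (expCoeff (-f1 - 1) (-f1-1-(γ:ℤ)) (-f1-1-(-f1-1-(γ:ℤ))) 1 *
          expCoeff (-(-f2-1-(g-(-f1-1-(-f1-1-(γ:ℤ))))) - 1) f2 (g - (-f1-1-(-f1-1-(γ:ℤ)))) (-1) *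
          expCoeff (-(e2 - (-f2-1-(g-(-f1-1-(-f1-1-(γ:ℤ)))))) - 1) (e1 - (-f1-1-(γ:ℤ))) e0 (-1))
        = (-1:ℚ)^E0n * (qch (-(f1:ℚ)-1) γ * qch (-(f2:ℚ)-1) (G-γ) *
            qch ((e0:ℚ)+(e1:ℚ)+(f1:ℚ)+1+(γ:ℚ)) E0n) := by
      intro γ hγ
      rw [mem_range, Nat.lt_succ_iff] at hγ
      have h0 : -f1-1-(-f1-1-(γ:ℤ)) = (γ:ℤ) := by ring
      rw [h0]
      have h2 : g - (γ:ℤ) = ((G-γ : ℕ):ℤ) := by omega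
      rw [h2]
      have h2b : -(-f2-1-((G-γ:ℕ):ℤ)) - 1 = f2 + ((G-γ:ℕ):ℤ) := by ring
      rw [h2b]
      have h3 : -(e2 - (-f2-1-((G-γ:ℕ):ℤ))) - 1 = e0+e1+f1+1+(γ:ℤ) := by omega
      rw [h3]
      have F1 : expCoeff (-f1 - 1) (-f1-1-(γ:ℤ)) (γ:ℤ) 1
          = gchoose (-f1-1) γ := by
        rw [expCoeff, if_pos ⟨Int.natCast_nonneg γ, by ring⟩, Int.toNat_natCast, one_pow, mul_one]
      have F2 : expCoeff (f2 + ((G-γ:ℕ):ℤ)) f2 ((G-γ:ℕ):ℤ) (-1)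
          = gchoose (f2 + ((G-γ:ℕ):ℤ)) (G-γ) * (-1)^(G-γ) := by
        rw [expCoeff, if_pos ⟨Int.natCast_nonneg _, by ring⟩, Int.toNat_natCast]
      have F3 : expCoeff (e0+e1+f1+1+(γ:ℤ)) (e1 - (-f1-1-(γ:ℤ))) e0 (-1)
          = gchoose (e0+e1+f1+1+(γ:ℤ)) E0n * (-1)^E0n := by
        rw [expCoeff, if_pos ⟨he0, by ring⟩, hE0def]
      rw [F1, F2, F3, gchoose_eq, gchoose_eq, gchoose_eq]
      have hD : qch (((G-γ:ℕ):ℚ) - 1 - ((f2:ℚ)+((G-γ:ℕ):ℚ))) (G-γ)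
          = (-1:ℚ)^(G-γ) * qch ((f2:ℚ)+((G-γ:ℕ):ℚ)) (G-γ) := qch_neg _ _
      have hDa : ((G-γ:ℕ):ℚ) - 1 - ((f2:ℚ)+((G-γ:ℕ):ℚ)) = -(f2:ℚ)-1 := by ring
      rw [hDa] at hD
      push_cast
      push_cast at hD
      linear_combination (-(qch (-(f1:ℚ)-1) γ *
        qch ((e0:ℚ)+(e1:ℚ)+(f1:ℚ)+1+(γ:ℚ)) E0n * (-1:ℚ)^E0n)) * hD
    rw [Finset.sum_congr rfl hLev, Finset.sum_congr rfl hRev, ← Finset.mul_sum, ← Finset.mul_sum,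
      ← Finset.mul_sum]
    congr 1
    refine qch_core G E0n (-(e1:ℚ)-1) (-(e2:ℚ)-1) (-(f1:ℚ)-1) (-(f2:ℚ)-1)
      ((e0:ℚ)+(e1:ℚ)+(f1:ℚ)+1) ?_ ?_
    · have hZ : (-e2-1 : ℤ) = (E0n:ℤ) + (G:ℤ) - 1 - (-e1-1) - (-f1-1) - (-f2-1) := by omega
      have := congrArg (fun z : ℤ => (z:ℚ)) hZ
      push_cast at this
      linarith
    · have hZ : (e0+e1+f1+1 : ℤ) = (E0n:ℤ) - 1 - (-e1-1) - (-f1-1) := by omega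
      have := congrArg (fun z : ℤ => (z:ℚ)) hZ
      push_cast at this
      linarith
end

section
/- Conjugation of module vertex operators by the Virasoro exponential: for v ∈ V acting on a module W₁, e^{x₂L(1)} e^{(2r+1)πi L(0)} x₂^{-2L(0)} Y₁(v, x₀) x₂^{2L(0)} e^{-(2r+1)πi L(0)} e^{-x₂L(1)} = Y₁(e^{(x₂+x₀)L(1)} (-(x₂+x₀)^{-2})^{L(0)} v, -x₀/((x₂+x₀)x₂)). -/
section Aux
variable {V W : Type*} [AddCommGroup V] [Module ℂ V] [AddCommGroup W] [Module ℂ W]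

/-- iterated adjoint `(ad L)^N A` -/
def adn (L : Module.End ℂ W) : ℕ → Module.End ℂ W → Module.End ℂ W
  | 0, A => A
  | (N+1), A => ⁅L, adn L N A⁆

noncomputable def Gc (N j : ℕ) : ℂ := (-1 : ℂ) ^ j * (N.choose j : ℂ)

noncomputable def EG (N : ℕ) : ℕ → ℂ
  | 0 => 0
  | (j+1) => -(Gc N j)

lemma Gc_succ (N j : ℕ) : Gc (N+1) j = Gc N j + EG N j := by
  cases j with
  | zero => simp [Gc, EG]
  | succ j =>
      simp only [Gc, EG, Nat.choose_succ_succ']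
      push_cast
      ring

lemma adn_eq_sum (L A : Module.End ℂ W) (N : ℕ) :
    adn L N A = ∑ j ∈ Finset.range (N+1),
      Gc N j • (L ^ (N - j) * A * L ^ j) := by
  induction N with
  | zero => simp [adn, Gc]
  | succ N ih =>
      have step : adn L (N+1) A
          = ∑ j ∈ Finset.range (N+1),
              (Gc N j • (L ^ (N + 1 - j) * A * L ^ j)
                - Gc N j • (L ^ (N + 1 - (j+1)) * A * L ^ (j+1))) := by
        show ⁅L, adn L N A⁆ = _
        rw [ih, Ring.lie_def, Finset.mul_sum, Finset.sum_mul, ← Finset.sum_sub_distrib]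
        refine Finset.sum_congr rfl ?_
        intro j hj
        have hjN : j ≤ N := Nat.lt_succ_iff.mp (Finset.mem_range.mp hj)
        have e1 : N + 1 - j = (N - j) + 1 := by omega
        have e2 : N + 1 - (j+1) = N - j := by omega
        rw [mul_smul_comm, smul_mul_assoc, ← smul_sub, e1, e2, pow_succ']
        noncomm_ring
        module
      rw [step, Finset.sum_sub_distrib]
      symm
      have h1 : ∑ j ∈ Finset.range (N+2), Gc (N+1) j • (L ^ (N + 1 - j) * A * L ^ j)
          = ∑ j ∈ Finset.range (N+2), (Gc N j • (L ^ (N + 1 - j) * A * L ^ j)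
              + EG N j • (L ^ (N + 1 - j) * A * L ^ j)) := by
        refine Finset.sum_congr rfl ?_
        intro j _
        rw [Gc_succ, add_smul]
      rw [h1, Finset.sum_add_distrib,
        Finset.sum_range_succ (f := fun j => Gc N j • (L ^ (N + 1 - j) * A * L ^ j)),
        Finset.sum_range_succ' (f := fun j => EG N j • (L ^ (N + 1 - j) * A * L ^ j))]
      have hz1 : Gc N (N+1) = 0 := by
        simp [Gc, Nat.choose_eq_zero_of_lt (Nat.lt_succ_self N)]
      have hz2 : EG N 0 = 0 := rfl
      rw [hz1, hz2, zero_smul, zero_smul, add_zero, add_zero]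
      rw [sub_eq_add_neg]
      congr 1
      rw [← Finset.sum_neg_distrib]
      refine Finset.sum_congr rfl ?_
      intro j _
      show EG N (j+1) • _ = -(Gc N j • _)
      rw [show EG N (j+1) = -(Gc N j) from rfl, neg_smul]

end Aux

noncomputable def Fc (T : ℂ) (N m : ℕ) : ℂ :=
  (N.choose m : ℂ) * ∏ i ∈ Finset.range m, (T - N + 1 + i)

noncomputable def Ec (T : ℂ) (N : ℕ) : ℕ → ℂ
  | 0 => 0
  | (m+1) => (T - 2*N + m) * Fc T N m

lemma Fc_of_gt (T : ℂ) {N m : ℕ} (hm : N < m) : Fc T N m = 0 := by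
  simp [Fc, Nat.choose_eq_zero_of_lt hm]

lemma Fc_succ (T : ℂ) (N m : ℕ) : Fc T (N+1) m = Fc T N m + Ec T N m := by
  cases m with
  | zero => simp [Fc, Ec]
  | succ m =>
      show Fc T (N+1) (m+1) = Fc T N (m+1) + (T - 2*N + m) * Fc T N m
      rcases le_or_gt m N with hmN | hmN
      · have hpeel : ∏ i ∈ Finset.range (m+1), (T - (N+1 : ℕ) + 1 + i)
            = (∏ i ∈ Finset.range m, (T - N + 1 + i)) * (T - N) := by
          rw [Finset.prod_range_succ']
          push_cast
          congr 1
          · refine Finset.prod_congr rfl ?_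
            intro i _
            push_cast
            ring
          · push_cast; ring
        have hpeel2 : ∏ i ∈ Finset.range (m+1), (T - N + 1 + i)
            = (∏ i ∈ Finset.range m, (T - N + 1 + i)) * (T - N + 1 + m) := by
          rw [Finset.prod_range_succ]
        have hpascal : ((N+1).choose (m+1) : ℂ) = (N.choose (m+1) : ℂ) + (N.choose m : ℂ) := by
          rw [Nat.choose_succ_succ']
          push_cast
          ring
        have hcr : (N.choose (m+1) : ℂ) * (m+1) = (N.choose m : ℂ) * ((N : ℂ) - m) := by
          have := Nat.choose_succ_right_eq N m
          have h2 : (N.choose (m+1) : ℂ) * (m+1) = (N.choose m : ℂ) * ((N - m : ℕ) : ℂ) := by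
            exact_mod_cast congrArg (Nat.cast : ℕ → ℂ) this
          rw [h2, Nat.cast_sub hmN]
        simp only [Fc, hpeel, hpeel2, hpascal]
        set Q := ∏ i ∈ Finset.range m, (T - N + 1 + i) with hQ
        push_cast
        linear_combination (-Q) * hcr
      · rw [Fc_of_gt T (by omega), Fc_of_gt T (by omega), Fc_of_gt T (by omega)]
        ring

section LemB
variable {V W : Type*} [AddCommGroup V] [Module ℂ V] [AddCommGroup W] [Module ℂ W]

lemma adn_Y1 (Y1 : V → ℤ → Module.End ℂ W) (L1V : Module.End ℂ V)
    (L1W : Module.End ℂ W) (v : V) (h n0 : ℤ)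
    (hbr : ∀ (k : ℕ) (n : ℤ), ⁅L1W, Y1 ((L1V ^ k) v) n⁆
      = (2 * ((h : ℂ) - k) - n - 2) • Y1 ((L1V ^ k) v) (n + 1) + Y1 ((L1V ^ (k + 1)) v) n)
    (N : ℕ) :
    adn L1W N (Y1 v n0) = ∑ m ∈ Finset.range (N+1),
      Fc (2*(h:ℂ) - n0 - 2) N m • Y1 ((L1V ^ (N - m)) v) (n0 + m) := by
  set T : ℂ := 2*(h:ℂ) - n0 - 2 with hT
  induction N with
  | zero =>
      show Y1 v n0 = _
      rw [Finset.range_one, Finset.sum_singleton]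
      simp [Fc]
  | succ N ih =>
      have step : adn L1W (N+1) (Y1 v n0)
          = ∑ m ∈ Finset.range (N+1),
              (Fc T N m • Y1 ((L1V ^ (N + 1 - m)) v) (n0 + m)
                + ((T - 2*N + m) * Fc T N m) • Y1 ((L1V ^ (N - m)) v) (n0 + m + 1)) := by
        show ⁅L1W, adn L1W N (Y1 v n0)⁆ = _
        rw [ih]
        have hlie : ⁅L1W, ∑ m ∈ Finset.range (N+1),
              Fc T N m • Y1 ((L1V ^ (N - m)) v) (n0 + m)⁆
            = ∑ m ∈ Finset.range (N+1), ⁅L1W, Fc T N m • Y1 ((L1V ^ (N - m)) v) (n0 + m)⁆ := by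
          rw [Ring.lie_def, Finset.mul_sum, Finset.sum_mul, ← Finset.sum_sub_distrib]
          exact Finset.sum_congr rfl fun m _ => by rw [Ring.lie_def]
        rw [hlie]
        refine Finset.sum_congr rfl ?_
        intro m hm
        have hmN : m ≤ N := Nat.lt_succ_iff.mp (Finset.mem_range.mp hm)
        rw [Ring.lie_def, mul_smul_comm, smul_mul_assoc, ← smul_sub, ← Ring.lie_def, hbr (N - m) (n0 + m)]
        have hc : (2 * ((h : ℂ) - (N - m : ℕ)) - ((n0 + m : ℤ) : ℂ) - 2) = T - 2*N + m := by
          rw [Nat.cast_sub hmN]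
          push_cast
          ring
        have hk : N - m + 1 = N + 1 - m := by omega
        rw [hc, hk, smul_add, smul_smul, mul_comm (Fc T N m), add_comm]
      rw [step, Finset.sum_add_distrib]
      symm
      have h1 : ∑ m ∈ Finset.range (N+2), Fc T (N+1) m • Y1 ((L1V ^ (N + 1 - m)) v) (n0 + m)
          = ∑ m ∈ Finset.range (N+2), (Fc T N m • Y1 ((L1V ^ (N + 1 - m)) v) (n0 + m)
              + Ec T N m • Y1 ((L1V ^ (N + 1 - m)) v) (n0 + m)) := by
        exact Finset.sum_congr rfl fun m _ => by rw [Fc_succ, add_smul]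
      rw [h1, Finset.sum_add_distrib,
        Finset.sum_range_succ (f := fun m => Fc T N m • Y1 ((L1V ^ (N + 1 - m)) v) (n0 + m)),
        Finset.sum_range_succ' (f := fun m => Ec T N m • Y1 ((L1V ^ (N + 1 - m)) v) (n0 + m))]
      rw [Fc_of_gt T (Nat.lt_succ_self N), zero_smul, add_zero,
        show Ec T N 0 = 0 from rfl, zero_smul, add_zero]
      congr 1
      refine Finset.sum_congr rfl ?_
      intro m hm
      have hmN : m ≤ N := Nat.lt_succ_iff.mp (Finset.mem_range.mp hm)
      show Ec T N (m+1) • _ = _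
      rw [show Ec T N (m+1) = (T - 2*N + m) * Fc T N m from rfl,
        show N + 1 - (m+1) = N - m by omega,
        show (n0 + ((m:ℕ)+1 : ℕ) : ℤ) = n0 + (m:ℤ) + 1 by push_cast; ring]
end LemB


/-- Conjugation of module vertex operators by the Virasoro exponentials
(formula (7.25)):  for `v ∈ V` homogeneous of weight `h ∈ ℤ` acting on a module
`W₁`,
`e^{x₂L(1)} e^{(2r+1)πi L(0)} x₂^{-2L(0)} Y₁(v,x₀) x₂^{2L(0)} e^{-(2r+1)πi L(0)} e^{-x₂L(1)}
  = Y₁(e^{(x₂+x₀)L(1)} (-(x₂+x₀)^{-2})^{L(0)} v, -x₀/((x₂+x₀)x₂))`,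
with `(x₂+x₀)^m` expanded in nonnegative powers of `x₀`.  Stated
coefficientwise at the monomial `x₀^p x₂^q`, applied to an `L(0)`-eigenvector
`w` of `W₁` of eigenvalue `μ` (the eigenvalue cancels, leaving integral powers).
Here `L1V` is `L(1)` on `V`, `L0W, L1W` are `L(0), L(1)` on `W₁`; the
hypotheses are the standard commutator formulas `[L(0), Y(u,x)]` and
`[L(1), Y(u,x)]` for the homogeneous vectors `u = L(1)ᵏv` (of weight `h-k`),
and `[L(0), L(1)] = -L(1)`. -/
theorem conj_module_vertex_operator_by_virasoro
    {V W1 : Type*} [AddCommGroup V] [Module ℂ V] [AddCommGroup W1] [Module ℂ W1]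
    (Y1 : V → ℤ → Module.End ℂ W1) (L1V : Module.End ℂ V)
    (L0W L1W : Module.End ℂ W1) (v : V) (h : ℤ) (r : ℤ)
    (hL0L1 : ⁅L0W, L1W⁆ = -L1W)
    (hL0br : ∀ (k : ℕ) (n : ℤ), ⁅L0W, Y1 ((L1V ^ k) v) n⁆
      = (((h : ℂ) - k) - n - 1) • Y1 ((L1V ^ k) v) n)
    (hL1br : ∀ (k : ℕ) (n : ℤ), ⁅L1W, Y1 ((L1V ^ k) v) n⁆
      = (2 * ((h : ℂ) - k) - n - 2) • Y1 ((L1V ^ k) v) (n + 1) + Y1 ((L1V ^ (k + 1)) v) n)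
    (μ : ℂ) (w : W1) (hw : L0W w = μ • w) :
    ∀ p q : ℤ,
      (if 0 ≤ q + 2 * p + 2 * h then
        ∑ j ∈ Finset.range ((q + 2 * p + 2 * h).toNat + 1),
          (((((q + 2 * p + 2 * h).toNat - j).factorial * j.factorial : ℕ) : ℂ))⁻¹ •
            (((-1 : ℂ) ^ j * (-1 : ℂ) ^ (h + p)) •
              (L1W ^ ((q + 2 * p + 2 * h).toNat - j)) ((Y1 v (-p - 1)) ((L1W ^ j) w)))
      else 0)
      = ∑ n ∈ Finset.Icc (-p - 1) (p + q + 2 * h - 1),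
          ((((p + q + 2 * h - n - 1).toNat.factorial : ℕ) : ℂ))⁻¹ •
            (((-1 : ℂ) ^ (h + n + 1) * ((gchoose (p + q) ((p + n + 1).toNat) : ℚ) : ℂ)) •
              (Y1 ((L1V ^ (p + q + 2 * h - n - 1).toNat) v) n) w) := by
  intro p q
  by_cases hpos : 0 ≤ q + 2 * p + 2 * h
  · rw [if_pos hpos]
    set M : ℕ := (q + 2 * p + 2 * h).toNat with hMdef
    have hM : (M : ℤ) = q + 2 * p + 2 * h := Int.toNat_of_nonneg hpos
    set T : ℂ := 2 * (h : ℂ) - ((-p - 1 : ℤ) : ℂ) - 2 with hT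
    set c : ℂ := (-1 : ℂ) ^ (h + p) * ((M.factorial : ℕ) : ℂ)⁻¹ with hc
    have hS : (adn L1W M (Y1 v (-p - 1))) w
        = ∑ m ∈ Finset.range (M + 1),
            Fc T M m • (Y1 ((L1V ^ (M - m)) v) (-p - 1 + m)) w := by
      rw [adn_Y1 Y1 L1V L1W v h (-p - 1) hL1br M, LinearMap.sum_apply]
      exact Finset.sum_congr rfl fun m _ => by rw [LinearMap.smul_apply]
    have hS2 : (adn L1W M (Y1 v (-p - 1))) w
        = ∑ j ∈ Finset.range (M + 1),
            Gc M j • (L1W ^ (M - j)) ((Y1 v (-p - 1)) ((L1W ^ j) w)) := by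
      rw [adn_eq_sum, LinearMap.sum_apply]
      exact Finset.sum_congr rfl fun j _ => by
        rw [LinearMap.smul_apply, Module.End.mul_apply, Module.End.mul_apply]
    have hL : (∑ j ∈ Finset.range (M + 1),
        ((((M - j).factorial * j.factorial : ℕ) : ℂ))⁻¹ •
          (((-1 : ℂ) ^ j * (-1 : ℂ) ^ (h + p)) •
            (L1W ^ (M - j)) ((Y1 v (-p - 1)) ((L1W ^ j) w))))
        = c • (adn L1W M (Y1 v (-p - 1))) w := by
      rw [hS2, Finset.smul_sum]
      refine Finset.sum_congr rfl ?_
      intro j hj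
      have hjM : j ≤ M := Nat.lt_succ_iff.mp (Finset.mem_range.mp hj)
      rw [smul_smul, smul_smul]
      congr 1
      have hf1 : (((M - j).factorial : ℕ) : ℂ) ≠ 0 :=
        Nat.cast_ne_zero.mpr (Nat.factorial_ne_zero _)
      have hf2 : ((j.factorial : ℕ) : ℂ) ≠ 0 :=
        Nat.cast_ne_zero.mpr (Nat.factorial_ne_zero _)
      have hfacM : ((M.factorial : ℕ) : ℂ) ≠ 0 :=
        Nat.cast_ne_zero.mpr (Nat.factorial_ne_zero M)
      have hckey : ((M.choose j : ℕ) : ℂ)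
          = ((M.factorial : ℕ) : ℂ) * ((((M - j).factorial : ℕ) : ℂ) * ((j.factorial : ℕ) : ℂ))⁻¹ := by
        rw [eq_mul_inv_iff_mul_eq₀ (mul_ne_zero hf1 hf2)]
        exact_mod_cast congrArg (Nat.cast : ℕ → ℂ)
          (by rw [← Nat.choose_mul_factorial_mul_factorial hjM]; ring)
      rw [hc, Gc, hckey]
      push_cast
      field_simp
    rw [hL, hS, Finset.smul_sum]
    refine Finset.sum_nbij' (i := fun m : ℕ => -p - 1 + (m : ℤ))
      (j := fun n : ℤ => (n + p + 1).toNat) ?_ ?_ ?_ ?_ ?_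
    · intro m hm
      simp only [Finset.mem_range] at hm
      simp only [Finset.mem_Icc]
      omega
    · intro n hn
      simp only [Finset.mem_Icc] at hn
      simp only [Finset.mem_range]
      omega
    · intro m hm
      simp only [Finset.mem_range] at hm
      show (-p - 1 + (m : ℤ) + p + 1).toNat = m
      omega
    · intro n hn
      simp only [Finset.mem_Icc] at hn
      show -p - 1 + (((n + p + 1).toNat : ℕ) : ℤ) = n
      omega
    · intro m hm
      beta_reduce
      simp only [Finset.mem_range] at hm
      have hmM : m ≤ M := by omega
      have ht1 : (p + q + 2 * h - (-p - 1 + (m : ℤ)) - 1).toNat = M - m := by omega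
      have ht2 : (p + (-p - 1 + (m : ℤ)) + 1).toNat = m := by omega
      rw [ht1, ht2, smul_smul, smul_smul]
      congr 1
      -- scalar identity
      have hMc : ((M : ℕ) : ℂ) = (q : ℂ) + 2 * p + 2 * h := by
        exact_mod_cast congrArg (Int.cast : ℤ → ℂ) hM
      have hsign : (-1 : ℂ) ^ (h + (-p - 1 + (m : ℤ)) + 1) = (-1 : ℂ) ^ (h + p) * (-1 : ℂ) ^ m := by
        have e2 : ((-1 : ℂ)) ^ ((-2) * p) = 1 := by
          rw [zpow_mul]
          norm_num
        rw [show h + (-p - 1 + (m : ℤ)) + 1 = ((h + p) + (-2) * p) + (m : ℤ) by ring,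
          zpow_add₀ (by norm_num : (-1 : ℂ) ≠ 0), zpow_natCast,
          zpow_add₀ (by norm_num : (-1 : ℂ) ≠ 0), e2, mul_one]
      have hgch : ((gchoose (p + q) m : ℚ) : ℂ)
          = (∏ i ∈ Finset.range m, (((p : ℂ) + q) - i)) / ((m.factorial : ℕ) : ℂ) := by
        rw [gchoose]
        push_cast [Rat.cast_prod]
        rfl
      have hprod : (∏ i ∈ Finset.range m, (T - (M : ℂ) + 1 + i))
          = (-1 : ℂ) ^ m * ∏ i ∈ Finset.range m, (((p : ℂ) + q) - i) := by
        calc ∏ i ∈ Finset.range m, (T - (M : ℂ) + 1 + i)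
            = ∏ i ∈ Finset.range m, ((-1 : ℂ) * (((p : ℂ) + q) - i)) := by
              refine Finset.prod_congr rfl ?_
              intro i _
              rw [hT, hMc]
              push_cast
              ring
          _ = (-1 : ℂ) ^ m * ∏ i ∈ Finset.range m, (((p : ℂ) + q) - i) := by
              rw [Finset.prod_mul_distrib, Finset.prod_const, Finset.card_range]
      have hf1 : (((M - m).factorial : ℕ) : ℂ) ≠ 0 :=
        Nat.cast_ne_zero.mpr (Nat.factorial_ne_zero _)
      have hf2 : ((m.factorial : ℕ) : ℂ) ≠ 0 :=
        Nat.cast_ne_zero.mpr (Nat.factorial_ne_zero _)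
      have hfM : ((M.factorial : ℕ) : ℂ) ≠ 0 :=
        Nat.cast_ne_zero.mpr (Nat.factorial_ne_zero _)
      have hckey : ((M.choose m : ℕ) : ℂ)
          = ((M.factorial : ℕ) : ℂ) * ((((M - m).factorial : ℕ) : ℂ) * ((m.factorial : ℕ) : ℂ))⁻¹ := by
        rw [eq_mul_inv_iff_mul_eq₀ (mul_ne_zero hf1 hf2)]
        exact_mod_cast congrArg (Nat.cast : ℕ → ℂ)
          (by rw [← Nat.choose_mul_factorial_mul_factorial hmM]; ring)
      rw [hc, hsign, hgch, Fc, hprod, hckey]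
      field_simp
  · rw [if_neg hpos, Finset.Icc_eq_empty (by omega), Finset.sum_empty]
end
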